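/- Let {|ψ¹_j⟩}_{j=1,…,N} be unit vectors spanning ℂ^D and {|ψ²_j⟩}_{j=1,…,N} unit vectors in ℂ^D, with Gram matrices Γ₁ and Γ₂. Suppose there exists a single linear operator A_S on ℂ^D with A_S†A_S ≤ 1 and complex scalars c_j such that A_S|ψ¹_j⟩ = c_j|ψ²_j⟩ for all j, and let p_j = |c_j|². Then the N×N matrix Π with entries Π_{j'j} = c̄_{j'} c_j is positive semidefinite of rank at most one, has diagonal entries Π_{jj} = p_j, and satisfies that Γ₁ − Π∘Γ₂ is positive semidefinite. -/

import Mathlib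

open Matrix BigOperators
open scoped ComplexOrder

/-- **Single-operator transformation, necessity.**  If a single operator `A_S`
with `A_S† A_S ≤ 1` takes the unit vectors `ψ1 j` (spanning `ℂ^D`) to
`c j • ψ2 j`, then the matrix `Π` with entries `Π_{j'j} = conj (c j') * c j` is
positive semidefinite of rank at most one, has diagonal `p j = ‖c j‖²`, and
`Γ₁ - Π ∘ Γ₂` is positive semidefinite. -/
theorem single_operator_necessity {D N : ℕ}
    (ψ1 ψ2 : Fin N → (Fin D → ℂ))
    (hψ1unit : ∀ j, star (ψ1 j) ⬝ᵥ ψ1 j = 1)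
    (hψ2unit : ∀ j, star (ψ2 j) ⬝ᵥ ψ2 j = 1)
    (hspan : Submodule.span ℂ (Set.range ψ1) = ⊤)
    (Γ1 Γ2 : Matrix (Fin N) (Fin N) ℂ)
    (hΓ1 : ∀ j' j, Γ1 j' j = star (ψ1 j') ⬝ᵥ ψ1 j)
    (hΓ2 : ∀ j' j, Γ2 j' j = star (ψ2 j') ⬝ᵥ ψ2 j)
    (AS : Matrix (Fin D) (Fin D) ℂ)
    (c : Fin N → ℂ)
    (hAS : (1 - ASᴴ * AS).PosSemidef)
    (hAct : ∀ j, AS *ᵥ ψ1 j = c j • ψ2 j)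
    (p : Fin N → ℝ)
    (hp : ∀ j, p j = ‖c j‖ ^ 2) :
    (Matrix.PosSemidef (fun j' j => star (c j') * c j : Matrix (Fin N) (Fin N) ℂ)) ∧
    (Matrix.rank (fun j' j => star (c j') * c j : Matrix (Fin N) (Fin N) ℂ) ≤ 1) ∧
    (∀ j, (fun j' j => star (c j') * c j : Matrix (Fin N) (Fin N) ℂ) j j = (p j : ℂ)) ∧
    (Γ1 - Matrix.hadamard (fun j' j => star (c j') * c j) Γ2).PosSemidef := by
  have hPi_eq : (fun j' j => star (c j') * c j : Matrix (Fin N) (Fin N) ℂ)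
      = Matrix.vecMulVec (fun j => star (c j)) c := by
    ext j' j; rfl
  refine ⟨?_, ?_, ?_, ?_⟩
  · refine Matrix.PosSemidef.of_dotProduct_mulVec_nonneg ?_ ?_
    · ext j' j
      show star (star (c j) * c j') = star (c j') * c j
      simp [mul_comm]
    · intro x
      have h : star x ⬝ᵥ ((fun j' j => star (c j') * c j : Matrix (Fin N) (Fin N) ℂ) *ᵥ x)
          = star (c ⬝ᵥ x) * (c ⬝ᵥ x) := by
        simp only [dotProduct, Matrix.mulVec, Pi.star_apply, star_sum, star_mul',
          Finset.sum_mul, Finset.mul_sum]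
        rw [Finset.sum_comm]
        apply Finset.sum_congr rfl
        intro j _
        apply Finset.sum_congr rfl
        intro j' _
        ring
      rw [h]
      exact star_mul_self_nonneg _
  · rw [hPi_eq, Matrix.vecMulVec_eq (Fin 1)]
    exact (Matrix.rank_mul_le_left _ _).trans
      ((Matrix.rank_le_card_width _).trans_eq (Fintype.card_fin 1))
  · intro j
    simp [hp j, Complex.star_def, Complex.mul_conj', Complex.conj_mul',
      Complex.normSq_eq_conj_mul_self]
  · set B : Matrix (Fin D) (Fin N) ℂ := fun d j => ψ1 j d with hB
    have key : Γ1 - Matrix.hadamard (fun j' j => star (c j') * c j) Γ2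
        = Bᴴ * (1 - ASᴴ * AS) * B := by
      have hAB : AS * B = fun d j => c j * ψ2 j d := by
        ext d j
        have := congrFun (hAct j) d
        rw [Matrix.mul_apply]
        simpa [Matrix.mul_apply, Matrix.mulVec, dotProduct, hB] using this
      have h1 : Bᴴ * B = Γ1 := by
        ext j' j
        rw [Matrix.mul_apply]
        simp only [Matrix.conjTranspose_apply]
        simp [Matrix.mul_apply, hΓ1, dotProduct, hB, Matrix.conjTranspose_apply]
      have h2 : Bᴴ * (ASᴴ * AS) * B
          = Matrix.hadamard (fun j' j => star (c j') * c j) Γ2 := by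
        have heq : Bᴴ * (ASᴴ * AS) * B = (AS * B)ᴴ * (AS * B) := by
          simp only [Matrix.conjTranspose_mul, Matrix.mul_assoc]
        rw [heq]
        ext j' j
        rw [Matrix.mul_apply]
        simp only [Matrix.conjTranspose_apply]
        simp only [hAB]
        show _ = star (c j') * c j * Γ2 j' j
        simp only [Matrix.mul_apply, Matrix.conjTranspose_apply, Matrix.hadamard_apply,
          hΓ2, dotProduct, Pi.star_apply, star_mul', Finset.mul_sum]
        apply Finset.sum_congr rfl
        intro d _
        ring
      rw [Matrix.mul_sub, Matrix.sub_mul, Matrix.mul_one, h1, h2]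
    rw [key]
    exact hAS.conjTranspose_mul_mul_same B
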